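/- arXiv:2212.00363 — 2 statements merged into one kernel-verified Lean document; each statement's English description precedes it below -/
import Mathlib

section
/- In a weak Hopf quasigroup H, the antipode is unique: if S and S' both satisfy the antipode axioms, then S = S'. -/
noncomputable section

open TensorProduct

namespace WHQPaper

variable (k : Type*) [Field k]

/-- `(a ⊗ b) ↦ f a * g b` into the scalars. -/
def sc2 {M N : Type*} [AddCommGroup M] [Module k M] [AddCommGroup N] [Module k N]
    (f : M →ₗ[k] k) (g : N →ₗ[k] k) : M ⊗[k] N →ₗ[k] k :=
  (LinearMap.mul' k k).comp (TensorProduct.map f g)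

/-- `(a ⊗ b) ↦ f a • g b`. -/
def sm2 {M N P : Type*} [AddCommGroup M] [Module k M] [AddCommGroup N] [Module k N]
    [AddCommGroup P] [Module k P] (f : M →ₗ[k] k) (g : N →ₗ[k] P) : M ⊗[k] N →ₗ[k] P :=
  TensorProduct.lift ((LinearMap.lsmul k P).compl₁₂ f g)

/-- `(a ⊗ b) ↦ m (f a) (g b)`. -/
def mu2 {M N A B C : Type*} [AddCommGroup M] [Module k M] [AddCommGroup N] [Module k N]
    [AddCommGroup A] [Module k A] [AddCommGroup B] [Module k B] [AddCommGroup C] [Module k C]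
    (m : A →ₗ[k] B →ₗ[k] C) (f : M →ₗ[k] A) (g : N →ₗ[k] B) : M ⊗[k] N →ₗ[k] C :=
  TensorProduct.lift (m.compl₁₂ f g)

/-- the bilinear map `(a ⊗ b) ↦ (c ⊗ d) ↦ (f a c) ⊗ (g b d)`. -/
def pair2 {A B C D E₁ E₂ : Type*} [AddCommGroup A] [Module k A] [AddCommGroup B] [Module k B]
    [AddCommGroup C] [Module k C] [AddCommGroup D] [Module k D]
    [AddCommGroup E₁] [Module k E₁] [AddCommGroup E₂] [Module k E₂]
    (f : A →ₗ[k] C →ₗ[k] E₁) (g : B →ₗ[k] D →ₗ[k] E₂) :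
    (A ⊗[k] B) →ₗ[k] (C ⊗[k] D) →ₗ[k] (E₁ ⊗[k] E₂) :=
  TensorProduct.lift ((TensorProduct.mapBilinear (RingHom.id k) C D E₁ E₂).compl₁₂ f g)

variable {H : Type*} [AddCommGroup H] [Module k H]

/-- A weak Hopf quasigroup without its antipode: a unital (not necessarily associative)
magma and a comonoid subject to the compatibility axioms (1)-(3) of
Alvarez-Fernandez-Gonzalez. -/
structure WHQpre (H : Type*) [AddCommGroup H] [Module k H] where
  mul : H →ₗ[k] H →ₗ[k] H
  one : H
  comul : H →ₗ[k] H ⊗[k] H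
  counit : H →ₗ[k] k
  one_mul' : ∀ h, mul one h = h
  mul_one' : ∀ h, mul h one = h
  coassoc : ∀ h, (TensorProduct.assoc k H H H)
      ((TensorProduct.map comul LinearMap.id) (comul h))
    = (TensorProduct.map LinearMap.id comul) (comul h)
  counit_left : ∀ h, (TensorProduct.lid k H)
      ((TensorProduct.map counit LinearMap.id) (comul h)) = h
  counit_right : ∀ h, (TensorProduct.rid k H)
      ((TensorProduct.map LinearMap.id counit) (comul h)) = h
  /-- (1): `δ(hg) = h₁g₁ ⊗ h₂g₂` -/
  comul_mul : ∀ h g, comul (mul h g) = pair2 k mul mul (comul h) (comul g)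
  /-- (2): `ε((hg)l) = ε(h(gl))` -/
  eps_assoc : ∀ h g l, counit (mul (mul h g) l) = counit (mul h (mul g l))
  /-- (2): `ε((hg)l) = ε(hg₁)ε(g₂l)` -/
  eps_weak₁ : ∀ h g l, counit (mul (mul h g) l)
    = sc2 k (counit ∘ₗ mul h) (counit ∘ₗ mul.flip l) (comul g)
  /-- (2): `ε((hg)l) = ε(hg₂)ε(g₁l)` -/
  eps_weak₂ : ∀ h g l, counit (mul (mul h g) l)
    = sc2 k (counit ∘ₗ mul.flip l) (counit ∘ₗ mul h) (comul g)
  /-- (3): `1₁ ⊗ 1₂ ⊗ 1₃ = 1₁ ⊗ 1₂1'₁ ⊗ 1'₂` -/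
  unit_weak₁ : (TensorProduct.map comul LinearMap.id) (comul one)
    = pair2 k (pair2 k mul mul) mul ((comul one) ⊗ₜ[k] one)
        ((TensorProduct.assoc k H H H).symm (one ⊗ₜ[k] comul one))
  /-- (3): `1₁ ⊗ 1₂ ⊗ 1₃ = 1₁ ⊗ 1'₁1₂ ⊗ 1'₂` -/
  unit_weak₂ : (TensorProduct.map comul LinearMap.id) (comul one)
    = pair2 k (pair2 k mul mul) mul
        ((TensorProduct.assoc k H H H).symm (one ⊗ₜ[k] comul one)) ((comul one) ⊗ₜ[k] one)

variable {k}

/-- convolution product of linear endomorphisms: `(f * g)(h) = f(h₁)g(h₂)`. -/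
def WHQpre.conv (A : WHQpre k H) (f g : H →ₗ[k] H) : H →ₗ[k] H :=
  (mu2 k A.mul f g).comp A.comul

/-- The axioms (4) for an antipode `S` of a weak Hopf quasigroup, with target morphism
`εt = id * S` and source morphism `εs = S * id`. -/
structure WHQpre.IsAntipode (A : WHQpre k H) (S εt εs : H →ₗ[k] H) : Prop where
  /-- `ε_t = id_H * S` -/
  εt_eq : εt = A.conv LinearMap.id S
  /-- `ε_s = S * id_H` -/
  εs_eq : εs = A.conv S LinearMap.id
  /-- (4-1): `ε_t(h) = ε(1₁h)1₂` -/
  εt_def : ∀ h, εt h = sm2 k (A.counit ∘ₗ A.mul.flip h) LinearMap.id (A.comul A.one)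
  /-- (4-2): `ε_s(h) = 1₁ε(h1₂)` -/
  εs_def : ∀ h, εs h = sm2 k (A.counit ∘ₗ A.mul h) LinearMap.id
      ((TensorProduct.comm k H H) (A.comul A.one))
  /-- (4-3): `S = S * ε_t` -/
  S_conv_εt : A.conv S εt = S
  /-- (4-3): `S = ε_s * S` -/
  εs_conv_S : A.conv εs S = S
  /-- (4-4): `S(h₁)(h₂g) = ε_s(h)g` -/
  ax44 : ∀ h g, mu2 k A.mul S (A.mul.flip g) (A.comul h) = A.mul (εs h) g
  /-- (4-5): `h₁(S(h₂)g) = ε_t(h)g` -/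
  ax45 : ∀ h g, mu2 k A.mul LinearMap.id ((A.mul.flip g) ∘ₗ S) (A.comul h) = A.mul (εt h) g
  /-- (4-6): `(hg₁)S(g₂) = hε_t(g)` -/
  ax46 : ∀ h g, mu2 k A.mul (A.mul h) S (A.comul g) = A.mul h (εt g)
  /-- (4-7): `(hS(g₁))g₂ = hε_s(g)` -/
  ax47 : ∀ h g, mu2 k A.mul ((A.mul h) ∘ₗ S) LinearMap.id (A.comul g) = A.mul h (εs g)

variable (k)

/-- A weak Hopf quasigroup. -/
structure WHQ (H : Type*) [AddCommGroup H] [Module k H] extends WHQpre k H where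
  S : H →ₗ[k] H
  εt : H →ₗ[k] H
  εs : H →ₗ[k] H
  antipode : toWHQpre.IsAntipode S εt εs

end WHQPaper

namespace WHQPaper

variable {k H : Type*} [Field k] [AddCommGroup H] [Module k H]

lemma mu2_tmul (m : H →ₗ[k] H →ₗ[k] H) (f g : H →ₗ[k] H) (a b : H) :
    mu2 k m f g (a ⊗ₜ[k] b) = m (f a) (g b) := rfl

lemma aux_assoc (m : H →ₗ[k] H →ₗ[k] H) (S g : H →ₗ[k] H) (a : H) (t : H ⊗[k] H) :
    mu2 k m (mu2 k m S LinearMap.id) g ((TensorProduct.assoc k H H H).symm (a ⊗ₜ[k] t))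
      = mu2 k m (m (S a)) g t := by
  induction t using TensorProduct.induction_on with
  | zero => simp
  | tmul b c =>
      rw [TensorProduct.assoc_symm_tmul]
      rfl
  | add x y hx hy => simp [TensorProduct.tmul_add, hx, hy]

lemma mu2_map_left (m : H →ₗ[k] H →ₗ[k] H) (F : H ⊗[k] H →ₗ[k] H) (g : H →ₗ[k] H)
    (δ : H →ₗ[k] H ⊗[k] H) (t : H ⊗[k] H) :
    mu2 k m F g (TensorProduct.map δ LinearMap.id t) = mu2 k m (F ∘ₗ δ) g t := by
  induction t using TensorProduct.induction_on with
  | zero => simp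
  | tmul b c => rfl
  | add x y hx hy => simp [hx, hy]

end WHQPaper

open WHQPaper in
/-- In a weak Hopf quasigroup, the antipode is unique: if `S` and `S'` both satisfy
the antipode axioms, then `S = S'`. -/
theorem antipode_unique {k H : Type*} [Field k] [AddCommGroup H] [Module k H]
    (A : WHQpre k H) (S εt εs S' εt' εs' : H →ₗ[k] H)
    (h1 : A.IsAntipode S εt εs) (h2 : A.IsAntipode S' εt' εs') :
    S = S' := by
  have hεt : εt = εt' := by
    ext h; rw [h1.εt_def, h2.εt_def]
  have hεs : εs = εs' := by
    ext h; rw [h1.εs_def, h2.εs_def]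
  have E1 : mu2 k A.mul S εt' =
      (mu2 k A.mul (mu2 k A.mul S LinearMap.id) S') ∘ₗ
        (((TensorProduct.assoc k H H H).symm : H ⊗[k] (H ⊗[k] H) →ₗ[k] (H ⊗[k] H) ⊗[k] H) ∘ₗ
          TensorProduct.map LinearMap.id A.comul) := by
    apply TensorProduct.ext'
    intro a b
    simp only [LinearMap.comp_apply, TensorProduct.map_tmul, LinearMap.id_apply,
      LinearEquiv.coe_coe]
    rw [aux_assoc, mu2_tmul, h2.ax46 (S a) b]
  have hεs1 : (mu2 k A.mul S LinearMap.id) ∘ₗ A.comul = εs' := by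
    rw [← hεs, h1.εs_eq]; rfl
  ext h
  calc S h = (A.conv S εt) h := by rw [h1.S_conv_εt]
    _ = mu2 k A.mul S εt' (A.comul h) := by rw [hεt]; rfl
    _ = mu2 k A.mul (mu2 k A.mul S LinearMap.id) S'
          ((TensorProduct.assoc k H H H).symm
            ((TensorProduct.map LinearMap.id A.comul) (A.comul h))) := by
        rw [E1]; rfl
    _ = mu2 k A.mul (mu2 k A.mul S LinearMap.id) S'
          ((TensorProduct.map A.comul LinearMap.id) (A.comul h)) := by
        rw [← A.coassoc h, LinearEquiv.symm_apply_apply]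
    _ = mu2 k A.mul ((mu2 k A.mul S LinearMap.id) ∘ₗ A.comul) S' (A.comul h) := by
        rw [mu2_map_left]
    _ = (A.conv εs' S') h := by rw [hεs1]; rfl
    _ = S' h := by rw [h2.εs_conv_S]
end
end

section
/- In a group-cograded weak Hopf quasigroup H = (H_p)_{p∈G}, for every p ∈ G the maps ε_p^t, ε_p^s, ε̃_p^t, ε̃_p^s : H_e → H_p satisfy the composition identities: ε_p^t ∘ ε̃_p^t = ε_p^t, ε̃_p^t ∘ ε_p^t = ε̃_p^t, ε_p^s ∘ ε̃_p^s = ε_p^s, and ε̃_p^s ∘ ε_p^s = ε̃_p^s (where composition is taken via the case p = e of the inner map). -/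
noncomputable section

open TensorProduct

namespace WHQPaper

variable (k : Type*) [Field k]

variable {G : Type*} [Group G]

/-- transport along an equality of indices. -/
def castH (H : G → Type*) [∀ p, AddCommGroup (H p)] [∀ p, Module k (H p)]
    {p q : G} (e : p = q) : H p →ₗ[k] H q where
  toFun x := e ▸ x
  map_add' := by subst e; intros; rfl
  map_smul' := by subst e; intros; rfl

variable (G)

/-- A group-cograded weak Hopf quasigroup: a family of (not necessarily associative)
unital algebras `(H_p)_{p ∈ G}`, comultiplications `Δ_{p,q} : H_{pq} → H_p ⊗ H_q` which are
coassociative algebra maps, a counit `ε : H_e → k` and an antipode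
`S = (S_p : H_p → H_{p⁻¹})`, subject to the axioms of Definition 3.1, together with the
four (co)unital maps `ε^t_p, ε^s_p, ε̃^t_p, ε̃^s_p : H_e → H_p` given by their defining
formulas. -/
structure GCWHQ (H : G → Type*) [∀ p, AddCommGroup (H p)] [∀ p, Module k (H p)] where
  mul : ∀ p, H p →ₗ[k] H p →ₗ[k] H p
  one : ∀ p, H p
  comul : ∀ p q, H (p * q) →ₗ[k] H p ⊗[k] H q
  counit : H 1 →ₗ[k] k
  antS : ∀ p, H p →ₗ[k] H p⁻¹
  εt : ∀ p, H 1 →ₗ[k] H p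
  εs : ∀ p, H 1 →ₗ[k] H p
  εt' : ∀ p, H 1 →ₗ[k] H p
  εs' : ∀ p, H 1 →ₗ[k] H p
  one_mul' : ∀ p (h : H p), mul p (one p) h = h
  mul_one' : ∀ p (h : H p), mul p h (one p) = h
  /-- each `Δ_{p,q}` is multiplicative -/
  comul_mul : ∀ p q (h g : H (p * q)),
    comul p q (mul (p * q) h g) = pair2 k (mul p) (mul q) (comul p q h) (comul p q g)
  coassoc : ∀ p q r (h : H (p * q * r)),
    (TensorProduct.assoc k (H p) (H q) (H r))
        ((TensorProduct.map (comul p q) LinearMap.id) (comul (p * q) r h))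
      = (TensorProduct.map LinearMap.id (comul q r))
          (comul p (q * r) (castH k H (mul_assoc p q r) h))
  counit_left : ∀ p (h : H p),
    (TensorProduct.lid k (H p)) ((TensorProduct.map counit LinearMap.id)
      (comul 1 p (castH k H (one_mul p).symm h))) = h
  counit_right : ∀ p (h : H p),
    (TensorProduct.rid k (H p)) ((TensorProduct.map LinearMap.id counit)
      (comul p 1 (castH k H (mul_one p).symm h))) = h
  eps_assoc : ∀ g h l : H 1, counit (mul 1 (mul 1 g h) l) = counit (mul 1 g (mul 1 h l))
  /-- `ε(ghl) = ε(gh₁)ε(h₂l)` -/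
  eps_weak₁ : ∀ g h l : H 1, counit (mul 1 (mul 1 g h) l)
    = sc2 k (counit ∘ₗ mul 1 g) (counit ∘ₗ (mul 1).flip l)
        (comul 1 1 (castH k H (one_mul (1 : G)).symm h))
  /-- `ε(ghl) = ε(gh₂)ε(h₁l)` -/
  eps_weak₂ : ∀ g h l : H 1, counit (mul 1 (mul 1 g h) l)
    = sc2 k (counit ∘ₗ (mul 1).flip l) (counit ∘ₗ mul 1 g)
        (comul 1 1 (castH k H (one_mul (1 : G)).symm h))
  /-- (3.1): `(Δ_{p,q} ⊗ id)Δ_{pq,r}(1) = (Δ_{p,q}(1) ⊗ 1_r)(1_p ⊗ Δ_{q,r}(1))` -/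
  unit_weak₁ : ∀ p q r, (TensorProduct.map (comul p q) LinearMap.id)
      (comul (p * q) r (one (p * q * r)))
    = pair2 k (pair2 k (mul p) (mul q)) (mul r)
        ((comul p q (one (p * q))) ⊗ₜ[k] (one r))
        ((TensorProduct.assoc k (H p) (H q) (H r)).symm
          ((one p) ⊗ₜ[k] (comul q r (one (q * r)))))
  /-- (3.2): `(Δ_{p,q} ⊗ id)Δ_{pq,r}(1) = (1_p ⊗ Δ_{q,r}(1))(Δ_{p,q}(1) ⊗ 1_r)` -/
  unit_weak₂ : ∀ p q r, (TensorProduct.map (comul p q) LinearMap.id)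
      (comul (p * q) r (one (p * q * r)))
    = pair2 k (pair2 k (mul p) (mul q)) (mul r)
        ((TensorProduct.assoc k (H p) (H q) (H r)).symm
          ((one p) ⊗ₜ[k] (comul q r (one (q * r)))))
        ((comul p q (one (p * q))) ⊗ₜ[k] (one r))
  /-- (3.4): `ε^t_p(h) = ε(1_{(1,e)}h) 1_{(2,p)}` -/
  εt_def : ∀ p (h : H 1), εt p h
    = sm2 k (counit ∘ₗ (mul 1).flip h) LinearMap.id (comul 1 p (one (1 * p)))
  /-- (3.5): `ε^s_p(h) = 1_{(1,p)} ε(h1_{(2,e)})` -/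
  εs_def : ∀ p (h : H 1), εs p h
    = sm2 k (counit ∘ₗ mul 1 h) LinearMap.id
        ((TensorProduct.comm k (H p) (H 1)) (comul p 1 (one (p * 1))))
  /-- (3.11): `ε̃^t_p(h) = 1_{(1,p)} ε(1_{(2,e)}h)` -/
  εt'_def : ∀ p (h : H 1), εt' p h
    = sm2 k (counit ∘ₗ (mul 1).flip h) LinearMap.id
        ((TensorProduct.comm k (H p) (H 1)) (comul p 1 (one (p * 1))))
  /-- (3.12): `ε̃^s_p(h) = ε(h1_{(1,e)}) 1_{(2,p)}` -/
  εs'_def : ∀ p (h : H 1), εs' p h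
    = sm2 k (counit ∘ₗ mul 1 h) LinearMap.id (comul 1 p (one (1 * p)))
  /-- (3.6): `S = S * ε_t` -/
  S_conv_εt : ∀ p (h : H p),
    mu2 k (mul p⁻¹) (antS p) (εt p⁻¹) (comul p 1 (castH k H (mul_one p).symm h)) = antS p h
  /-- (3.6): `S = ε_s * S` -/
  εs_conv_S : ∀ p (h : H p),
    mu2 k (mul p⁻¹) (εs p⁻¹) (antS p) (comul 1 p (castH k H (one_mul p).symm h)) = antS p h
  /-- (3.7): `S(h_{(1,p⁻¹)})(h_{(2,p)}g) = ε^s_p(h)g` -/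
  antip₁ : ∀ p (h : H 1) (g : H p),
    mu2 k (mul p) ((castH k H (inv_inv p)) ∘ₗ antS p⁻¹) ((mul p).flip g)
        (comul p⁻¹ p (castH k H (inv_mul_cancel p).symm h))
      = mul p (εs p h) g
  /-- (3.8): `h_{(1,p)}(S(h_{(2,p⁻¹)})g) = ε^t_p(h)g` -/
  antip₂ : ∀ p (h : H 1) (g : H p),
    mu2 k (mul p) LinearMap.id (((mul p).flip g) ∘ₗ (castH k H (inv_inv p)) ∘ₗ antS p⁻¹)
        (comul p p⁻¹ (castH k H (mul_inv_cancel p).symm h))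
      = mul p (εt p h) g
  /-- (3.9): `(gh_{(1,p)})S(h_{(2,p⁻¹)}) = gε^t_p(h)` -/
  antip₃ : ∀ p (h : H 1) (g : H p),
    mu2 k (mul p) (mul p g) ((castH k H (inv_inv p)) ∘ₗ antS p⁻¹)
        (comul p p⁻¹ (castH k H (mul_inv_cancel p).symm h))
      = mul p g (εt p h)
  /-- (3.10): `(gS(h_{(1,p⁻¹)}))h_{(2,p)} = gε^s_p(h)` -/
  antip₄ : ∀ p (h : H 1) (g : H p),
    mu2 k (mul p) ((mul p g) ∘ₗ (castH k H (inv_inv p)) ∘ₗ antS p⁻¹) LinearMap.id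
        (comul p⁻¹ p (castH k H (inv_mul_cancel p).symm h))
      = mul p g (εs p h)

end WHQPaper

section Aux

open WHQPaper

variable {k G : Type*} [Field k] [Group G] {H : G → Type*}
    [∀ p, AddCommGroup (H p)] [∀ p, Module k (H p)]

private lemma castH_one' (A : GCWHQ k G H) {p q : G} (e : p = q) :
    castH k H e (A.one p) = A.one q := by subst e; rfl

private lemma sm2_tmul {M N P : Type*} [AddCommGroup M] [Module k M] [AddCommGroup N]
    [Module k N] [AddCommGroup P] [Module k P] (f : M →ₗ[k] k) (g : N →ₗ[k] P)
    (a : M) (b : N) : sm2 k f g (a ⊗ₜ[k] b) = f a • g b := rfl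

private lemma sc2_tmul {M N : Type*} [AddCommGroup M] [Module k M] [AddCommGroup N]
    [Module k N] (f : M →ₗ[k] k) (g : N →ₗ[k] k)
    (a : M) (b : N) : sc2 k f g (a ⊗ₜ[k] b) = f a * g b := rfl

end Aux

open WHQPaper in
/-- In a group-cograded weak Hopf quasigroup, for every `p ∈ G` the maps
`ε^t_p, ε^s_p, ε̃^t_p, ε̃^s_p : H_e → H_p` satisfy
`ε^t_p ∘ ε̃^t_e = ε^t_p`, `ε̃^t_p ∘ ε^t_e = ε̃^t_p`, `ε^s_p ∘ ε̃^s_e = ε^s_p` and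
`ε̃^s_p ∘ ε^s_e = ε̃^s_p`. -/
theorem counital_maps_comp {k G : Type*} [Field k] [Group G] {H : G → Type*}
    [∀ p, AddCommGroup (H p)] [∀ p, Module k (H p)] (A : GCWHQ k G H) (p : G) :
    A.εt p ∘ₗ A.εt' 1 = A.εt p ∧
    A.εt' p ∘ₗ A.εt 1 = A.εt' p ∧
    A.εs p ∘ₗ A.εs' 1 = A.εs p ∧
    A.εs' p ∘ₗ A.εs 1 = A.εs' p := by
  refine ⟨?_, ?_, ?_, ?_⟩
  · ext h
    simp only [LinearMap.comp_apply]
    rw [A.εt_def, A.εt_def, A.εt'_def]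
    generalize A.comul 1 p (A.one (1 * p)) = T
    induction T using TensorProduct.induction_on with
    | zero => simp
    | tmul a b =>
      rw [sm2_tmul, sm2_tmul]
      congr 1
      simp only [LinearMap.comp_apply, LinearMap.flip_apply]
      have key := A.eps_weak₁ a (A.one 1) h
      rw [A.mul_one', castH_one' A ((one_mul (1 : G)).symm)] at key
      rw [key]
      generalize A.comul 1 1 (A.one (1 * 1)) = U
      induction U using TensorProduct.induction_on with
      | zero => simp
      | tmul c d =>
        rw [TensorProduct.comm_tmul, sm2_tmul, sc2_tmul]
        simp only [LinearMap.comp_apply, LinearMap.flip_apply, LinearMap.id_apply,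
          map_smul, smul_eq_mul]
        ring
      | add x y hx hy => simp only [map_add]; rw [hx, hy]
    | add x y hx hy => rw [map_add, map_add, hx, hy]
  · ext h
    simp only [LinearMap.comp_apply]
    rw [A.εt'_def, A.εt'_def, A.εt_def]
    generalize (TensorProduct.comm k (H p) (H 1)) (A.comul p 1 (A.one (p * 1))) = T
    induction T using TensorProduct.induction_on with
    | zero => simp
    | tmul b a =>
      rw [sm2_tmul, sm2_tmul]
      congr 1
      simp only [LinearMap.comp_apply, LinearMap.flip_apply]
      have key := A.eps_weak₂ b (A.one 1) h
      rw [A.mul_one', castH_one' A ((one_mul (1 : G)).symm)] at key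
      rw [key]
      generalize A.comul 1 1 (A.one (1 * 1)) = U
      induction U using TensorProduct.induction_on with
      | zero => simp
      | tmul c d =>
        rw [sm2_tmul, sc2_tmul]
        simp only [LinearMap.comp_apply, LinearMap.flip_apply, LinearMap.id_apply,
          map_smul, smul_eq_mul]

      | add x y hx hy => simp only [map_add]; rw [hx, hy]
    | add x y hx hy => rw [map_add, map_add, hx, hy]
  · ext h
    simp only [LinearMap.comp_apply]
    rw [A.εs_def, A.εs_def, A.εs'_def]
    generalize (TensorProduct.comm k (H p) (H 1)) (A.comul p 1 (A.one (p * 1))) = T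
    induction T using TensorProduct.induction_on with
    | zero => simp
    | tmul b a =>
      rw [sm2_tmul, sm2_tmul]
      congr 1
      simp only [LinearMap.comp_apply]
      have key := A.eps_weak₁ h (A.one 1) b
      rw [A.mul_one', castH_one' A ((one_mul (1 : G)).symm)] at key
      rw [key]
      generalize A.comul 1 1 (A.one (1 * 1)) = U
      induction U using TensorProduct.induction_on with
      | zero => simp
      | tmul c d =>
        rw [sm2_tmul, sc2_tmul]
        simp only [LinearMap.comp_apply, LinearMap.flip_apply, LinearMap.id_apply,
          map_smul, LinearMap.smul_apply, smul_eq_mul]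

      | add x y hx hy => simp only [map_add, LinearMap.add_apply]; rw [hx, hy]
    | add x y hx hy => rw [map_add, map_add, hx, hy]
  · ext h
    simp only [LinearMap.comp_apply]
    rw [A.εs'_def, A.εs'_def, A.εs_def]
    generalize A.comul 1 p (A.one (1 * p)) = T
    induction T using TensorProduct.induction_on with
    | zero => simp
    | tmul c' d' =>
      rw [sm2_tmul, sm2_tmul]
      congr 1
      simp only [LinearMap.comp_apply]
      have key := A.eps_weak₂ h (A.one 1) c'
      rw [A.mul_one', castH_one' A ((one_mul (1 : G)).symm)] at key
      rw [key]
      generalize A.comul 1 1 (A.one (1 * 1)) = U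
      induction U using TensorProduct.induction_on with
      | zero => simp
      | tmul a b =>
        rw [TensorProduct.comm_tmul, sm2_tmul, sc2_tmul]
        simp only [LinearMap.comp_apply, LinearMap.flip_apply, LinearMap.id_apply,
          map_smul, LinearMap.smul_apply, smul_eq_mul]
        ring
      | add x y hx hy => simp only [map_add, LinearMap.add_apply]; rw [hx, hy]
    | add x y hx hy => rw [map_add, map_add, hx, hy]
end
end
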